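/- arXiv:2202.04511 — 4 statements merged into one kernel-verified Lean document; each statement's English description precedes it below -/
import Mathlib

section
/- Let X × Y and X be locally compact separable metric spaces, let proj_X : X × Y → X be the projection onto the first component, let γ be a finite Borel measure on X × Y with μ = (proj_X)_*γ, let ν be a finite Borel measure on X, and let x ↦ η_x be a measurable family of finite Borel measures on X × Y such that γ(A) = ∫_X η_x(A) dν(x) for every Borel A ⊆ X × Y and η_x is concentrated on {x} × Y for ν-almost every x. Set C = { x ∈ X : η_x(X × Y) > 0 }. Then the restriction ν|_C is absolutely continuous with respect to μ, and writing h for the Radon–Nikodym density of ν|_C with respect to μ, one has h(x) · η_x = γ_x for μ-almost every x ∈ X, where (γ_x)_{x ∈ X} is a disintegration of γ with respect to μ into conditional probability measures concentrated on the fibres {x} × Y. -/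
open MeasureTheory Set
open scoped ENNReal

lemma countable_generatePiSystem {α : Type*} {S : Set (Set α)} (hS : S.Countable) :
    (generatePiSystem S).Countable := by
  have hsub : generatePiSystem S ⊆ (fun T => ⋂₀ T) '' {T : Set (Set α) | T.Finite ∧ T ⊆ S} := by
    intro t ht
    induction ht with
    | base hs =>
      exact ⟨{_}, ⟨finite_singleton _, singleton_subset_iff.2 hs⟩, sInter_singleton _⟩
    | inter hs ht hne ihs iht =>
      obtain ⟨T1, ⟨hT1f, hT1s⟩, rfl⟩ := ihs
      obtain ⟨T2, ⟨hT2f, hT2s⟩, rfl⟩ := iht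
      exact ⟨T1 ∪ T2, ⟨hT1f.union hT2f, union_subset hT1s hT2s⟩, by
        show ⋂₀ (T1 ∪ T2) = ⋂₀ T1 ∩ ⋂₀ T2
        exact sInter_union _ _⟩
  exact ((Set.countable_setOf_finite_subset hS).image _).mono hsub

/-- If `x ↦ η_x` disintegrates `γ` with respect to a measure `ν`, and
`C = {x : η_x(X × Y) > 0}`, then `ν|_C ≪ μ` where `μ = (proj_X)_*γ`, and the
Radon–Nikodym density `h` of `ν|_C` w.r.t. `μ` satisfies `h(x) • η_x = γ_x` for
`μ`-a.e. `x`, where `(γ_x)` is any disintegration of `γ` with respect to `μ` into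
conditional probability measures concentrated on the fibres `{x} × Y`. -/
theorem disintegration_absolutely_continuous
    {X Y : Type*}
    [MetricSpace X] [LocallyCompactSpace X] [TopologicalSpace.SeparableSpace X]
    [MeasurableSpace X] [BorelSpace X]
    [MetricSpace Y] [LocallyCompactSpace Y] [TopologicalSpace.SeparableSpace Y]
    [MeasurableSpace Y] [BorelSpace Y]
    (γ : Measure (X × Y)) [IsFiniteMeasure γ]
    (ν : Measure X) [IsFiniteMeasure ν]
    (η : X → Measure (X × Y))
    (hηfin : ∀ x, IsFiniteMeasure (η x))
    (hηmeas : Measurable η)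
    (hηdis : ∀ A : Set (X × Y), MeasurableSet A → γ A = ∫⁻ x, η x A ∂ν)
    (hηconc : ∀ᵐ x ∂ν, η x (({x} ×ˢ (Set.univ : Set Y))ᶜ) = 0) :
    (ν.restrict {x : X | 0 < η x Set.univ} ≪ γ.map Prod.fst) ∧
    ∀ γx : X → Measure (X × Y),
      Measurable γx →
      (∀ᵐ x ∂(γ.map Prod.fst), IsProbabilityMeasure (γx x)) →
      (∀ A : Set (X × Y), MeasurableSet A → γ A = ∫⁻ x, γx x A ∂(γ.map Prod.fst)) →
      (∀ᵐ x ∂(γ.map Prod.fst), γx x (({x} ×ˢ (Set.univ : Set Y))ᶜ) = 0) →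
      ∀ᵐ x ∂(γ.map Prod.fst),
        ((ν.restrict {x : X | 0 < η x Set.univ}).rnDeriv (γ.map Prod.fst) x) • η x = γx x := by
  have hfst : Measurable (Prod.fst : X × Y → X) := measurable_fst
  set μ : Measure X := γ.map Prod.fst with hμdef
  haveI hμfin : IsFiniteMeasure μ := by
    constructor
    rw [hμdef, Measure.map_apply hfst MeasurableSet.univ]
    exact measure_lt_top γ _
  set g : X → ℝ≥0∞ := fun x => η x Set.univ with hgdef
  have hgmeas : Measurable g := (Measure.measurable_coe MeasurableSet.univ).comp hηmeas
  set C : Set X := {x : X | 0 < η x Set.univ} with hCdef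
  have hCmeas : MeasurableSet C := measurableSet_lt measurable_const hgmeas
  -- general fiber lemma for measures concentrated on fibers
  have fiber_gen : ∀ (m' : Measure X) (κ : X → Measure (X × Y)),
      (∀ᵐ x ∂m', κ x (({x} ×ˢ (Set.univ : Set Y))ᶜ) = 0) →
      ∀ᵐ x ∂m', ∀ (A : Set (X × Y)) (B : Set X),
        κ x (A ∩ B ×ˢ (Set.univ : Set Y)) = B.indicator (fun x => κ x A) x := by
    intro m' κ hconc
    filter_upwards [hconc] with x hx A B
    by_cases hxB : x ∈ B
    · rw [indicator_of_mem hxB]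
      refine le_antisymm (measure_mono inter_subset_left) ?_
      have hnull : κ x (A ∩ (B ×ˢ (Set.univ : Set Y))ᶜ) = 0 := by
        refine measure_mono_null ?_ hx
        intro p hp
        simp only [mem_inter_iff, mem_compl_iff, mem_prod, mem_singleton_iff, mem_univ,
          and_true] at hp ⊢
        exact fun he => hp.2 (he ▸ hxB)
      calc κ x A = κ x ((A ∩ B ×ˢ (Set.univ : Set Y)) ∪ (A ∩ (B ×ˢ (Set.univ : Set Y))ᶜ)) := by
            rw [inter_union_compl]
        _ ≤ κ x (A ∩ B ×ˢ (Set.univ : Set Y)) + κ x (A ∩ (B ×ˢ (Set.univ : Set Y))ᶜ) :=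
            measure_union_le _ _
        _ = κ x (A ∩ B ×ˢ (Set.univ : Set Y)) := by rw [hnull, add_zero]
    · rw [indicator_of_notMem hxB]
      refine measure_mono_null ?_ hx
      intro p hp
      simp only [mem_inter_iff, mem_compl_iff, mem_prod, mem_singleton_iff, mem_univ,
        and_true] at hp ⊢
      exact fun he => hxB (he ▸ hp.2)
  have fiber := fiber_gen ν η hηconc
  -- μ = ν.withDensity g
  have hμν : μ = ν.withDensity g := by
    ext s hs
    rw [hμdef, Measure.map_apply hfst hs, withDensity_apply _ hs]
    have hpre : (Prod.fst : X × Y → X) ⁻¹' s = s ×ˢ (Set.univ : Set Y) := by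
      ext p; simp
    rw [hpre, hηdis _ (hs.prod MeasurableSet.univ)]
    calc ∫⁻ x, η x (s ×ˢ (Set.univ : Set Y)) ∂ν
        = ∫⁻ x, s.indicator g x ∂ν := by
          refine lintegral_congr_ae ?_
          filter_upwards [fiber] with x hx
          have := hx Set.univ s
          rwa [univ_inter] at this
      _ = ∫⁻ x in s, g x ∂ν := lintegral_indicator hs g
  -- absolute continuity
  have hac : ν.restrict C ≪ μ := by
    refine Measure.AbsolutelyContinuous.mk (fun s hs hμs => ?_)
    rw [hμν, withDensity_apply _ hs] at hμs
    have hg0 : ∀ᵐ x ∂(ν.restrict s), g x = 0 := (lintegral_eq_zero_iff hgmeas).1 hμs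
    rw [Measure.restrict_apply hs]
    have : ν (s ∩ C) = (ν.restrict s) C := by rw [Measure.restrict_apply hCmeas, inter_comm]
    rw [this]
    refine measure_mono_null (fun x hx => ?_) (ae_iff.1 hg0)
    simp only [hCdef, mem_setOf_eq, pos_iff_ne_zero] at hx
    exact hx
  refine ⟨hac, ?_⟩
  intro γx hγmeas hγprob hγdis hγconc
  have fiberγ := fiber_gen μ γx hγconc
  set h : X → ℝ≥0∞ := (ν.restrict C).rnDeriv μ with hhdef
  have hhmeas : Measurable h := Measure.measurable_rnDeriv _ _
  have hwd : μ.withDensity h = ν.restrict C := Measure.withDensity_rnDeriv_eq _ _ hac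
  have hzero : ∀ x, x ∉ C → ∀ A : Set (X × Y), η x A = 0 := by
    intro x hx A
    have hgx : g x = 0 := by
      simpa only [hCdef, mem_setOf_eq, pos_iff_ne_zero, not_not] using hx
    exact le_antisymm (le_trans (measure_mono (subset_univ A)) hgx.le) zero_le
  -- key pointwise lemma for each measurable set
  have key : ∀ A : Set (X × Y), MeasurableSet A →
      ∀ᵐ x ∂μ, h x * η x A = γx x A := by
    intro A hA
    have hmA : Measurable fun x => η x A := (Measure.measurable_coe hA).comp hηmeas
    have hfA : Measurable fun x => h x * η x A := hhmeas.mul hmA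
    have hgA : Measurable fun x => γx x A := (Measure.measurable_coe hA).comp hγmeas
    refine ae_eq_of_forall_setLIntegral_eq_of_sigmaFinite hfA hgA (fun B hB _ => ?_)
    have hBA : MeasurableSet (A ∩ B ×ˢ (Set.univ : Set Y)) :=
      hA.inter (hB.prod MeasurableSet.univ)
    have lhs : ∫⁻ x in B, h x * η x A ∂μ = γ (A ∩ B ×ˢ (Set.univ : Set Y)) := by
      calc ∫⁻ x in B, h x * η x A ∂μ
          = ∫⁻ x, η x A ∂((μ.restrict B).withDensity h) := by
            rw [lintegral_withDensity_eq_lintegral_mul _ hhmeas hmA]; rfl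
        _ = ∫⁻ x, η x A ∂(ν.restrict (B ∩ C)) := by
            rw [← restrict_withDensity hB, hwd, Measure.restrict_restrict hB]
        _ = ∫⁻ x in B, η x A ∂ν := by
            rw [show B ∩ C = C ∩ B from inter_comm _ _, ← Measure.restrict_restrict hCmeas,
              ← lintegral_indicator hCmeas]
            refine (lintegral_congr (fun x => ?_)).symm
            by_cases hx : x ∈ C
            · rw [indicator_of_mem hx]
            · rw [indicator_of_notMem hx, hzero x hx A]
        _ = ∫⁻ x, B.indicator (fun x => η x A) x ∂ν := (lintegral_indicator hB _).symm
        _ = ∫⁻ x, η x (A ∩ B ×ˢ (Set.univ : Set Y)) ∂ν := by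
            refine lintegral_congr_ae ?_
            filter_upwards [fiber] with x hx
            exact (hx A B).symm
        _ = γ (A ∩ B ×ˢ (Set.univ : Set Y)) := (hηdis _ hBA).symm
    have rhs : ∫⁻ x in B, γx x A ∂μ = γ (A ∩ B ×ˢ (Set.univ : Set Y)) := by
      calc ∫⁻ x in B, γx x A ∂μ
          = ∫⁻ x, B.indicator (fun x => γx x A) x ∂μ := (lintegral_indicator hB _).symm
        _ = ∫⁻ x, γx x (A ∩ B ×ˢ (Set.univ : Set Y)) ∂μ := by
            refine lintegral_congr_ae ?_
            filter_upwards [fiberγ] with x hx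
            exact (hx A B).symm
        _ = γ (A ∩ B ×ˢ (Set.univ : Set Y)) := (hγdis _ hBA).symm
    rw [lhs, rhs]
  -- upgrade to all measurable sets simultaneously via a countable π-system
  haveI : SecondCountableTopology X := UniformSpace.secondCountable_of_separable X
  haveI : SecondCountableTopology Y := UniformSpace.secondCountable_of_separable Y
  haveI : MeasurableSpace.CountablyGenerated (X × Y) := inferInstance
  set S : Set (Set (X × Y)) := generatePiSystem (MeasurableSpace.countableGeneratingSet (X × Y))
    with hSdef
  have hSc : S.Countable :=
    countable_generatePiSystem MeasurableSpace.countable_countableGeneratingSet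
  have hgen : (inferInstance : MeasurableSpace (X × Y)) = MeasurableSpace.generateFrom S :=
    (generateFrom_generatePiSystem_eq.trans
      MeasurableSpace.generateFrom_countableGeneratingSet).symm
  have main : ∀ᵐ x ∂μ, ∀ ⦃t : Set (X × Y)⦄, MeasurableSet t → h x * η x t = γx x t := by
    refine MeasurableSpace.ae_induction_on_inter hgen (isPiSystem_generatePiSystem _)
      ?_ ?_ ?_ ?_
    · exact ae_of_all _ (fun x => by simp)
    · refine (ae_ball_iff hSc).2 (fun t ht => ?_)
      have htm : MeasurableSet t := by
        have h2 := MeasurableSpace.measurableSet_generateFrom (s := S) ht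
        rw [← hgen] at h2
        exact h2
      exact key t htm
    · filter_upwards [key Set.univ MeasurableSet.univ, hγprob] with x hxU hxp t ht hCt
      haveI := hxp
      have h1 : γx x t + h x * η x tᶜ = 1 := by
        rw [← hCt, ← mul_add, measure_add_measure_compl ht, hxU, measure_univ]
      have h2 : γx x t + γx x tᶜ = 1 := by
        rw [measure_add_measure_compl ht, measure_univ]
      have hne : γx x t ≠ ⊤ := (measure_lt_top _ _).ne
      exact (ENNReal.add_right_inj hne).1 (h1.trans h2.symm)
    · refine ae_of_all _ (fun x f hdisj hf heq => ?_)
      rw [measure_iUnion hdisj hf, measure_iUnion hdisj hf, ← ENNReal.tsum_mul_left]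
      exact tsum_congr heq
  filter_upwards [main] with x hx
  ext t ht
  rw [Measure.smul_apply, smul_eq_mul]
  exact hx ht
end

section
/- Let X be a measurable space, let Y be a complete separable metric space with its Borel σ-algebra, let μ be a non-atomic probability measure on X, let T : X → Y be a measurable map, and let g : X → ProbabilityMeasure(Y) be a measurable map (with respect to the σ-algebra generated by the evaluation maps ρ ↦ ρ(A) for Borel A ⊆ Y). Suppose that (x ↦ δ_{T(x)})_*μ = g_*μ as measures on the space of Borel probability measures on Y. Then there exists a measurable map S : X → Y such that g(x) = δ_{S(x)} for μ-almost every x ∈ X. -/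
open MeasureTheory Metric Filter
open scoped ENNReal Topology

lemma key_dirac_of_zero_one {Y : Type*} [MetricSpace Y] [CompleteSpace Y]
    [MeasurableSpace Y] [BorelSpace Y]
    (u : ℕ → Y) (hu : DenseRange u) (ρ : Measure Y) [IsProbabilityMeasure ρ]
    (h01 : ∀ n k : ℕ, ρ (ball (u k) (1 / (n + 1))) = 0 ∨ ρ (ball (u k) (1 / (n + 1))) = 1) :
    ∃ y, ρ = Measure.dirac y := by
  have hrpos : ∀ n : ℕ, (0 : ℝ) < 1 / (n + 1) := fun n => by positivity
  -- for each n, some ball of radius 1/(n+1) has full measure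
  have hex : ∀ n : ℕ, ∃ k, ρ (ball (u k) (1 / (n + 1))) = 1 := by
    intro n
    by_contra hcon
    push_neg at hcon
    have h0 : ∀ k, ρ (ball (u k) (1 / (n + 1))) = 0 := fun k =>
      (h01 n k).resolve_right (hcon k)
    have hcover : (⋃ k, ball (u k) (1 / (n + 1) : ℝ)) = Set.univ := by
      apply Set.eq_univ_of_forall
      intro y
      obtain ⟨k, hk⟩ := hu.exists_dist_lt y (hrpos n)
      exact Set.mem_iUnion.2 ⟨k, by simpa [dist_comm] using hk⟩
    have : ρ Set.univ = 0 := by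
      rw [← hcover]; exact measure_iUnion_null h0
    simp [measure_univ] at this
  choose k hk using hex
  set B : ℕ → Set Y := fun n => ball (u (k n)) (1 / (n + 1)) with hB
  set C : ℕ → Set Y := fun n => ⋂ m ∈ Finset.range (n + 1), B m with hC
  have hCmeas : ∀ n, MeasurableSet (C n) := fun n =>
    MeasurableSet.biInter (Finset.range (n + 1)).countable_toSet fun m _ => measurableSet_ball
  have hC1 : ∀ n, ρ (C n) = 1 := by
    intro n
    have hcompl : ρ (C n)ᶜ = 0 := by
      rw [hC]
      rw [Set.compl_iInter₂]
      refine measure_biUnion_null_iff ((Finset.range (n + 1)).countable_toSet) |>.2 ?_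
      intro m _
      have : ρ (B m)ᶜ = ρ Set.univ - ρ (B m) :=
        measure_compl measurableSet_ball (measure_ne_top ρ _)
      rw [this, measure_univ, hk m]
      simp
    exact (prob_compl_eq_zero_iff (hCmeas n)).1 hcompl
  have hCne : ∀ n, (C n).Nonempty := fun n =>
    nonempty_of_measure_ne_zero (by rw [hC1 n]; exact one_ne_zero)
  choose y hy using hCne
  have hCB : ∀ n m : ℕ, n ≤ m → C m ⊆ B n := by
    intro n m hnm
    exact Set.biInter_subset_of_mem (Finset.mem_range.mpr (Nat.lt_succ_of_le hnm))
  have hyB : ∀ n m : ℕ, n ≤ m → y m ∈ B n := fun n m hnm => hCB n m hnm (hy m)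
  have hcauchy : CauchySeq y := by
    rw [Metric.cauchySeq_iff']
    intro ε hε
    obtain ⟨N, hN⟩ := exists_nat_one_div_lt (half_pos hε)
    refine ⟨N, fun n hn => ?_⟩
    have h1 : y n ∈ B N := hyB N n hn
    have h2 : y N ∈ B N := hyB N N le_rfl
    calc dist (y n) (y N) ≤ dist (y n) (u (k N)) + dist (u (k N)) (y N) := dist_triangle _ _ _
      _ < 1 / (N + 1) + 1 / (N + 1) := by
          rw [mem_ball] at h1 h2
          exact add_lt_add h1 (by rwa [dist_comm])
      _ < ε / 2 + ε / 2 := add_lt_add hN hN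
      _ = ε := add_halves ε
  obtain ⟨z, hz⟩ := cauchySeq_tendsto_of_complete hcauchy
  -- distance from center to z
  have hcz : ∀ n : ℕ, dist (u (k n)) z ≤ 1 / (n + 1) := by
    intro n
    have : ∀ᶠ m in atTop, dist (u (k n)) (y m) ≤ 1 / (n + 1) := by
      filter_upwards [eventually_ge_atTop n] with m hm
      have := hyB n m hm
      rw [mem_ball] at this
      rw [dist_comm] at this
      exact this.le
    exact le_of_tendsto (tendsto_const_nhds.dist hz) this
  have hcb : ∀ n : ℕ, ρ (closedBall z (2 / (n + 1))) = 1 := by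
    intro n
    have hsub : B n ⊆ closedBall z (2 / (n + 1)) := by
      intro w hw
      rw [mem_ball] at hw
      rw [mem_closedBall]
      calc dist w z ≤ dist w (u (k n)) + dist (u (k n)) z := dist_triangle _ _ _
        _ ≤ 1 / (n + 1) + 1 / (n + 1) := add_le_add hw.le (hcz n)
        _ = 2 / (n + 1) := by ring
    exact le_antisymm prob_le_one ((hk n).symm.le.trans (measure_mono hsub))
  have hsing : (⋂ n : ℕ, closedBall z (2 / ((n : ℝ) + 1))) = {z} := by
    apply Set.eq_singleton_iff_unique_mem.2
    constructor
    · exact Set.mem_iInter.2 fun n => mem_closedBall_self (by positivity)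
    · intro w hw
      rw [Set.mem_iInter] at hw
      have hdist : dist w z ≤ 0 := by
        have htend : Tendsto (fun n : ℕ => 2 / ((n : ℝ) + 1)) atTop (𝓝 0) := by
          have := (tendsto_one_div_add_atTop_nhds_zero_nat : Tendsto (fun n : ℕ => 1 / ((n : ℝ) + 1)) atTop (𝓝 0))
          have h2 := this.const_mul (2 : ℝ)
          simpa [div_eq_mul_inv, mul_comm, mul_assoc, one_div] using h2
        exact ge_of_tendsto htend (Eventually.of_forall fun n => hw n)
      exact dist_le_zero.1 hdist
  have hz1 : ρ {z} = 1 := by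
    have hanti : Antitone fun n : ℕ => closedBall z (2 / ((n : ℝ) + 1)) := by
      intro a b hab
      apply closedBall_subset_closedBall
      apply div_le_div_of_nonneg_left (by norm_num) (by positivity)
      exact_mod_cast by exact_mod_cast add_le_add_left (Nat.cast_le.2 hab) 1
    have := tendsto_measure_iInter_atTop (μ := ρ)
      (fun n => measurableSet_closedBall.nullMeasurableSet) hanti ⟨0, measure_ne_top ρ _⟩
    rw [hsing] at this
    have hconst : Tendsto ((ρ ∘ fun n : ℕ => closedBall z (2 / ((n : ℝ) + 1)))) atTop (𝓝 1) := by
      have : (ρ ∘ fun n : ℕ => closedBall z (2 / ((n : ℝ) + 1))) = fun _ => 1 := by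
        funext n; exact hcb n
      rw [this]; exact tendsto_const_nhds
    exact tendsto_nhds_unique this hconst
  refine ⟨z, ?_⟩
  ext A hA
  rw [Measure.dirac_apply' _ hA]
  by_cases hzA : z ∈ A
  · rw [Set.indicator_of_mem hzA]
    have : ρ {z} ≤ ρ A := measure_mono (Set.singleton_subset_iff.2 hzA)
    rw [hz1] at this
    exact le_antisymm prob_le_one this
  · rw [Set.indicator_of_notMem hzA]
    have hsub : A ⊆ {z}ᶜ := fun w hw => by
      simp only [Set.mem_compl_iff, Set.mem_singleton_iff]
      rintro rfl; exact hzA hw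
    have : ρ {z}ᶜ = 0 := by
      rw [measure_compl (measurableSet_singleton z) (measure_ne_top ρ _), measure_univ, hz1]
      simp
    exact le_antisymm (le_trans (measure_mono hsub) this.le) (zero_le)

/-- If `μ` is a non-atomic probability measure, `T : X → Y` is a measurable map into a
complete separable metric space and `g : X → 𝒫(Y)` is a Giry-measurable map whose
pushforward under `μ` agrees with that of `x ↦ δ_{T(x)}`, then there is a measurable
`S : X → Y` with `g(x) = δ_{S(x)}` for `μ`-a.e. `x`. -/
theorem exists_transport_map_of_dirac_class
    {X Y : Type*} [MeasurableSpace X]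
    [MetricSpace Y] [CompleteSpace Y] [TopologicalSpace.SeparableSpace Y]
    [MeasurableSpace Y] [BorelSpace Y]
    (μ : Measure X) [IsProbabilityMeasure μ]
    (hatom : ∀ x : X, μ {x} = 0)
    (T : X → Y) (hT : Measurable T)
    (g : X → ProbabilityMeasure Y)
    (hg : Measurable fun x => (g x : Measure Y))
    (h : μ.map (fun x => (Measure.dirac (T x) : Measure Y)) =
         μ.map (fun x => (g x : Measure Y))) :
    ∃ S : X → Y, Measurable S ∧ ∀ᵐ x ∂μ, (g x : Measure Y) = Measure.dirac (S x) := by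
  
  classical
  -- Y is nonempty
  obtain ⟨x₀, -⟩ := nonempty_of_measure_ne_zero
    (show μ Set.univ ≠ 0 by simp)
  haveI : Nonempty Y := ⟨T x₀⟩
  obtain ⟨u, hu⟩ := TopologicalSpace.exists_dense_seq Y
  have hrpos : ∀ n : ℕ, (0 : ℝ) < 1 / (n + 1) := fun n => by positivity
  -- the measurable set of measures which are 0/1-valued on the countable family of balls
  set D : Set (Measure Y) :=
    ⋂ (n : ℕ) (k : ℕ), (fun ρ : Measure Y => ρ (ball (u k) (1 / (n + 1)))) ⁻¹'
      ({0, 1} : Set ℝ≥0∞) with hD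
  have hDmeas : MeasurableSet D := by
    refine MeasurableSet.iInter fun n => MeasurableSet.iInter fun k => ?_
    exact (Measure.measurable_coe measurableSet_ball)
      ((measurableSet_singleton 0).union (measurableSet_singleton 1))
  have hmemD : ∀ ρ : Measure Y, ρ ∈ D ↔
      ∀ n k : ℕ, ρ (ball (u k) (1 / (n + 1))) = 0 ∨ ρ (ball (u k) (1 / (n + 1))) = 1 := by
    intro ρ
    simp [hD, Set.mem_iInter]
  have hdiracD : ∀ y : Y, Measure.dirac y ∈ D := by
    intro y
    rw [hmemD]
    intro n k
    rw [Measure.dirac_apply' _ measurableSet_ball]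
    by_cases hy : y ∈ ball (u k) (1 / (n + 1 : ℝ))
    · right; rw [Set.indicator_of_mem hy]; rfl
    · left; rw [Set.indicator_of_notMem hy]
  -- almost every g x is in D
  have haeD : ∀ᵐ x ∂μ, (g x : Measure Y) ∈ D := by
    have h1 : μ.map (fun x => (Measure.dirac (T x) : Measure Y)) Dᶜ = 0 := by
      rw [Measure.map_apply (f := fun x => (Measure.dirac (T x) : Measure Y))
        (Measure.measurable_dirac.comp hT) hDmeas.compl]
      have : (fun x => (Measure.dirac (T x) : Measure Y)) ⁻¹' Dᶜ = ∅ := by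
        apply Set.eq_empty_of_forall_notMem
        intro x hx
        exact hx (hdiracD (T x))
      rw [this]; exact measure_empty
    rw [h, Measure.map_apply hg hDmeas.compl] at h1
    exact h1
  -- hence a.e., g x is a Dirac measure
  have haedirac : ∀ᵐ x ∂μ, ∃ y, (g x : Measure Y) = Measure.dirac y := by
    filter_upwards [haeD] with x hx
    exact key_dirac_of_zero_one u hu (g x : Measure Y) ((hmemD _).1 hx)
  -- approximating measurable point-selection maps
  set p : ℕ → X → ℕ → Prop := fun n x k =>
    (g x : Measure Y) (ball (u k) (1 / (n + 1))) = 1 ∨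
      ∀ j : ℕ, (g x : Measure Y) (ball (u j) (1 / (n + 1))) ≠ 1 with hp
  have hpex : ∀ n x, ∃ k, p n x k := by
    intro n x
    by_cases hx : ∃ k, (g x : Measure Y) (ball (u k) (1 / (n + 1))) = 1
    · obtain ⟨k, hk⟩ := hx
      exact ⟨k, Or.inl hk⟩
    · push_neg at hx
      exact ⟨0, Or.inr hx⟩
  set f : ℕ → X → Y := fun n x => u (Nat.find (hpex n x)) with hf
  have hfmeas : ∀ n, Measurable (f n) := by
    intro n
    apply Measurable.comp (measurable_from_top (f := u))
    apply measurable_find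
    intro k
    have h1 : MeasurableSet {x | (g x : Measure Y) (ball (u k) (1 / (n + 1))) = 1} :=
      (Measure.measurable_coe measurableSet_ball).comp hg (measurableSet_singleton 1)
    have h2 : MeasurableSet {x | ∀ j : ℕ, (g x : Measure Y) (ball (u j) (1 / (n + 1))) ≠ 1} := by
      rw [Set.setOf_forall]
      refine MeasurableSet.iInter fun j => ?_
      exact ((Measure.measurable_coe measurableSet_ball).comp hg
        (measurableSet_singleton 1)).compl
    exact h1.union h2
  -- a.e. convergence of the approximations
  have haetend : ∀ᵐ x ∂μ, ∃ l : Y, Tendsto (fun n => f n x) atTop (𝓝 l) := by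
    filter_upwards [haedirac] with x hx
    obtain ⟨y, hy⟩ := hx
    refine ⟨y, ?_⟩
    have hdist : ∀ n : ℕ, dist (f n x) y < 1 / (n + 1) := by
      intro n
      have hexk : ∃ j : ℕ, (g x : Measure Y) (ball (u j) (1 / (n + 1))) = 1 := by
        obtain ⟨j, hj⟩ := hu.exists_dist_lt y (hrpos n)
        refine ⟨j, ?_⟩
        rw [hy, Measure.dirac_apply' _ measurableSet_ball,
          Set.indicator_of_mem (by rwa [mem_ball])]
        simp
      obtain ⟨q, hfq, hleft⟩ : ∃ q : ℕ, f n x = u q ∧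
          (g x : Measure Y) (ball (u q) (1 / (n + 1))) = 1 := by
        refine ⟨Nat.find (hpex n x), rfl, ?_⟩
        rcases Nat.find_spec (hpex n x) with hl | hr
        · exact hl
        · exact absurd hexk (by push_neg; exact hr)
      rw [hy, Measure.dirac_apply' _ measurableSet_ball] at hleft
      have hmem : y ∈ ball (u q) (1 / (n + 1 : ℝ)) := by
        by_contra hmem
        rw [Set.indicator_of_notMem hmem] at hleft
        simp at hleft
      rw [mem_ball] at hmem
      rw [hfq]
      rwa [dist_comm]
    rw [Metric.tendsto_atTop]
    intro ε hε
    obtain ⟨N, hN⟩ := exists_nat_one_div_lt hε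
    refine ⟨N, fun n hn => ?_⟩
    calc dist (f n x) y < 1 / (n + 1) := hdist n
      _ ≤ 1 / (N + 1) := by
          apply div_le_div_of_nonneg_left (by norm_num) (by positivity)
          exact_mod_cast add_le_add_left (Nat.cast_le.2 hn) 1
      _ < ε := hN
  obtain ⟨S, hSmeas, hStend⟩ :=
    measurable_limit_of_tendsto_metrizable_ae (μ := μ) (L := atTop)
      (fun n => (hfmeas n).aemeasurable) haetend
  refine ⟨S, hSmeas, ?_⟩
  filter_upwards [haedirac, hStend, haetend] with x hx hSx htend
  obtain ⟨y, hy⟩ := hx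
  -- f n x → y (from the proof above, reconstruct)
  have hdist : ∀ n : ℕ, dist (f n x) y < 1 / (n + 1) := by
    intro n
    have hexk : ∃ j : ℕ, (g x : Measure Y) (ball (u j) (1 / (n + 1))) = 1 := by
      obtain ⟨j, hj⟩ := hu.exists_dist_lt y (hrpos n)
      refine ⟨j, ?_⟩
      rw [hy, Measure.dirac_apply' _ measurableSet_ball,
        Set.indicator_of_mem (by rwa [mem_ball])]
      simp
    obtain ⟨q, hfq, hleft⟩ : ∃ q : ℕ, f n x = u q ∧
        (g x : Measure Y) (ball (u q) (1 / (n + 1))) = 1 := by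
      refine ⟨Nat.find (hpex n x), rfl, ?_⟩
      rcases Nat.find_spec (hpex n x) with hl | hr
      · exact hl
      · exact absurd hexk (by push_neg; exact hr)
    rw [hy, Measure.dirac_apply' _ measurableSet_ball] at hleft
    have hmem : y ∈ ball (u q) (1 / (n + 1 : ℝ)) := by
      by_contra hmem
      rw [Set.indicator_of_notMem hmem] at hleft
      simp at hleft
    rw [mem_ball] at hmem
    rw [hfq]
    rwa [dist_comm]
  have htendy : Tendsto (fun n => f n x) atTop (𝓝 y) := by
    rw [Metric.tendsto_atTop]
    intro ε hε
    obtain ⟨N, hN⟩ := exists_nat_one_div_lt hε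
    refine ⟨N, fun n hn => ?_⟩
    calc dist (f n x) y < 1 / (n + 1) := hdist n
      _ ≤ 1 / (N + 1) := by
          apply div_le_div_of_nonneg_left (by norm_num) (by positivity)
          exact_mod_cast add_le_add_left (Nat.cast_le.2 hn) 1
      _ < ε := hN
  rw [hy, tendsto_nhds_unique htendy hSx]
end

section
/- Let X and Y be locally compact, complete, separable metric spaces, let π : X → Y be a Borel map, let μ be a finite Borel measure on X, set ν = π_*μ, and let (μ_y)_{y∈Y} be a disintegration of μ over π. Then the disintegration map y ↦ μ_y satisfies the following Lusin-type property: for every Borel set A ⊆ Y with ν(A) < ∞ and every ε > 0, there exists a closed set K ⊆ A with ν(A \ K) < ε such that the restriction of y ↦ μ_y to K is continuous as a map into ProbabilityMeasure(X) with the topology of weak convergence. -/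
open MeasureTheory Filter Set
open scoped ENNReal NNReal Topology

/-- Lusin for simple functions. -/
lemma simpleFunc_lusin {Y : Type*} [MetricSpace Y] [MeasurableSpace Y] [BorelSpace Y]
    (ν : Measure Y) [IsFiniteMeasure ν] (g : SimpleFunc Y ℝ≥0)
    {A : Set Y} (hA : MeasurableSet A) {δ : ℝ≥0∞} (hδ0 : δ ≠ 0) (hδt : δ ≠ ⊤) :
    ∃ C, C ⊆ A ∧ IsClosed C ∧ ν (A \ C) < δ ∧ ContinuousOn g C := by
  classical
  set s : Finset ℝ≥0 := g.range with hs
  set n := s.card with hn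
  set e : ℝ≥0∞ := δ / (2 * (n + 1)) with he
  have hdiv0 : (2 * ((n : ℝ≥0∞) + 1)) ≠ 0 := by
    simp
  have hdivt : (2 * ((n : ℝ≥0∞) + 1)) ≠ ⊤ := by
    refine ENNReal.mul_ne_top (by norm_num) (by simp)
  have he0 : e ≠ 0 := by
    rw [he]
    exact (ENNReal.div_pos hδ0 hdivt).ne'
  have het : e ≠ ⊤ := by
    rw [he]
    exact (ENNReal.div_lt_top hδt hdiv0).ne
  set B : ℝ≥0 → Set Y := fun c => g ⁻¹' {c} ∩ A with hB
  have hBm : ∀ c, MeasurableSet (B c) := fun c => (g.measurableSet_fiber c).inter hA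
  have hex : ∀ c : ℝ≥0, ∃ F, F ⊆ B c ∧ IsClosed F ∧ ν (B c \ F) < e := fun c =>
    (hBm c).exists_isClosed_diff_lt (measure_ne_top ν _) he0
  choose F hF1 hF2 hF3 using hex
  refine ⟨⋃ c ∈ s, F c, ?_, ?_, ?_, ?_⟩
  · exact Set.iUnion₂_subset fun c _ => (hF1 c).trans Set.inter_subset_right
  · exact Set.Finite.isClosed_biUnion s.finite_toSet fun c _ => hF2 c
  · have hsub : A \ (⋃ c ∈ s, F c) ⊆ ⋃ c ∈ s, (B c \ F c) := by
      intro y hy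
      refine Set.mem_biUnion (g.mem_range_self y) ⟨⟨rfl, hy.1⟩, fun hyF => hy.2 ?_⟩
      exact Set.mem_biUnion (g.mem_range_self y) hyF
    refine (measure_mono hsub).trans_lt ?_
    refine (measure_biUnion_finset_le _ _).trans_lt ?_
    have hsum : ∑ c ∈ s, ν (B c \ F c) ≤ n * e := by
      rw [hn]
      calc ∑ c ∈ s, ν (B c \ F c) ≤ ∑ _c ∈ s, e := Finset.sum_le_sum fun c _ => (hF3 c).le
        _ = s.card * e := by rw [Finset.sum_const, nsmul_eq_mul]
    refine hsum.trans_lt ?_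
    have hlt : (n : ℝ≥0∞) * e < (2 * ((n : ℝ≥0∞) + 1)) * e := by
      refine ENNReal.mul_lt_mul_left he0 het ?_
      have : (n : ℝ≥0∞) < 2 * (n + 1) := by
        have : (n : ℝ≥0∞) + 1 ≤ 2 * (n + 1) := by
          nth_rewrite 1 [← one_mul ((n : ℝ≥0∞) + 1)]
          exact mul_le_mul_left one_le_two _
        exact lt_of_lt_of_le (ENNReal.lt_add_right (by simp) one_ne_zero) this
      exact this
    refine hlt.trans_le ?_
    rw [he, ENNReal.mul_div_cancel hdiv0 hdivt]
  · intro y hy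
    obtain ⟨c, hcs, hyc⟩ := Set.mem_iUnion₂.mp hy
    have hgy : g y = c := (hF1 c hyc).1
    set W : Set Y := (⋃ c' ∈ s.erase c, F c')ᶜ with hW
    have hWopen : IsOpen W :=
      (Set.Finite.isClosed_biUnion (s.erase c).finite_toSet fun c' _ => hF2 c').isOpen_compl
    have hyW : y ∈ W := by
      intro hymem
      obtain ⟨c', hc's, hyc'⟩ := Set.mem_iUnion₂.mp hymem
      exact (Finset.ne_of_mem_erase hc's) (((hF1 c' hyc').1.symm.trans hgy))
    have hev : ∀ᶠ z in 𝓝[⋃ c ∈ s, F c] y, g z = g y := by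
      filter_upwards [mem_nhdsWithin_of_mem_nhds (hWopen.mem_nhds hyW),
        self_mem_nhdsWithin] with z hzW hzC
      obtain ⟨c'', hc''s, hzc''⟩ := Set.mem_iUnion₂.mp hzC
      have : c'' = c := by
        by_contra hne
        exact hzW (Set.mem_biUnion (Finset.mem_erase.mpr ⟨hne, hc''s⟩) hzc'')
      rw [(hF1 c'' hzc'').1, this, hgy]
    exact (continuousWithinAt_const (b := g y)).congr_of_eventuallyEq hev rfl

/-- Lusin's theorem for `ℝ≥0`-valued measurable functions. -/
lemma lusin_nnreal {Y : Type*} [MetricSpace Y] [MeasurableSpace Y] [BorelSpace Y]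
    (ν : Measure Y) [IsFiniteMeasure ν] {h : Y → ℝ≥0} (hh : Measurable h)
    {A : Set Y} (hA : MeasurableSet A) {δ : ℝ≥0∞} (hδ0 : δ ≠ 0) (hδt : δ ≠ ⊤) :
    ∃ K, K ⊆ A ∧ IsClosed K ∧ ν (A \ K) < δ ∧ ContinuousOn h K := by
  classical
  obtain ⟨w, hw0, hwsum⟩ := ENNReal.exists_pos_sum_of_countable' hδ0 ℕ
  have hwlt : ∑' i, w i < ⊤ := hwsum.trans (lt_top_iff_ne_top.mpr hδt)
  have hwne : ∀ i, w i ≠ ⊤ := fun i => ((ENNReal.le_tsum i).trans_lt hwlt).ne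
  have hsm : StronglyMeasurable h := hh.stronglyMeasurable
  set g : ℕ → SimpleFunc Y ℝ≥0 := hsm.approx with hg
  have htend : ∀ x, Tendsto (fun n => g n x) atTop (𝓝 (h x)) := hsm.tendsto_approx
  -- Egorov
  have hw0top : (0 : ℝ) < (w 0).toReal := ENNReal.toReal_pos (hw0 0).ne' (hwne 0)
  obtain ⟨t, hts, htm, htμ, hunif⟩ :=
    tendstoUniformlyOn_of_ae_tendsto (f := fun n => (g n : Y → ℝ≥0)) (g := h) (s := A)
      (fun n => (g n).stronglyMeasurable) hsm hA (measure_ne_top ν A)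
      (Eventually.of_forall fun x _ => htend x) hw0top
  have htμ' : ν t ≤ w 0 := by
    rwa [ENNReal.ofReal_toReal (hwne 0)] at htμ
  -- closed subset of A \ t
  obtain ⟨K₀, hK₀sub, hK₀closed, hK₀μ⟩ :=
    (hA.diff htm).exists_isClosed_diff_lt (measure_ne_top ν _) (hw0 1).ne'
  -- closed sets for each simple function
  have hex : ∀ n : ℕ, ∃ C, C ⊆ A ∧ IsClosed C ∧ ν (A \ C) < w (n + 2) ∧
      ContinuousOn (g n) C := fun n =>
    simpleFunc_lusin ν (g n) hA (hw0 (n + 2)).ne' (hwne (n + 2))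
  choose C hC1 hC2 hC3 hC4 using hex
  refine ⟨K₀ ∩ ⋂ n, C n, fun y hy => (hK₀sub hy.1).1, ?_, ?_, ?_⟩
  · exact hK₀closed.inter (isClosed_iInter fun n => hC2 n)
  · have hsub : A \ (K₀ ∩ ⋂ n, C n) ⊆ (A ∩ t) ∪ ((A \ t) \ K₀) ∪ ⋃ n, (A \ C n) := by
      intro y hy
      rcases Classical.em (y ∈ K₀) with hK | hK
      · have : ¬ y ∈ ⋂ n, C n := fun hmem => hy.2 ⟨hK, hmem⟩
        obtain ⟨n, hn⟩ := by simpa [Set.mem_iInter] using this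
        exact Or.inr (Set.mem_iUnion.mpr ⟨n, ⟨hy.1, hn⟩⟩)
      · rcases Classical.em (y ∈ t) with ht | ht
        · exact Or.inl (Or.inl ⟨hy.1, ht⟩)
        · exact Or.inl (Or.inr ⟨⟨hy.1, ht⟩, hK⟩)
    calc ν (A \ (K₀ ∩ ⋂ n, C n))
        ≤ ν (A ∩ t) + ν ((A \ t) \ K₀) + ν (⋃ n, (A \ C n)) := by
          refine (measure_mono hsub).trans ?_
          exact (measure_union_le _ _).trans (add_le_add_left (measure_union_le _ _) _)
      _ ≤ w 0 + w 1 + ∑' n, w (n + 2) :=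
          add_le_add (add_le_add ((measure_mono Set.inter_subset_right).trans htμ') hK₀μ.le)
            ((measure_iUnion_le _).trans (ENNReal.tsum_le_tsum fun n => (hC3 n).le))
      _ = ∑' n, w n := by
          conv_rhs => rw [tsum_eq_zero_add' ENNReal.summable,
            tsum_eq_zero_add' ENNReal.summable]
          rw [add_assoc]
      _ < δ := hwsum
  · have hKsub : K₀ ∩ ⋂ n, C n ⊆ A \ t := fun y hy => hK₀sub hy.1
    refine (hunif.mono hKsub).continuousOn ?_
    exact (Eventually.of_forall (f := atTop) fun n => (hC4 n).mono fun y (hy : y ∈ K₀ ∩ ⋂ n, C n) => Set.mem_iInter.mp hy.2 n).frequently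

/-- **Lusin property for disintegration maps.** If `(μ_y)` is a disintegration of a
finite Borel measure `μ` over a Borel map `π : X → Y` between locally compact complete
separable metric spaces, `ν = π_*μ`, then for every Borel set `A ⊆ Y` of finite
`ν`-measure and every `ε > 0` there is a closed `K ⊆ A` with `ν(A \ K) < ε` on which the
disintegration map `y ↦ μ_y` is continuous into `𝒫(X)` with the weak topology. -/
theorem disintegration_map_lusin
    {X Y : Type*}
    [MetricSpace X] [LocallyCompactSpace X] [CompleteSpace X]
    [TopologicalSpace.SeparableSpace X] [MeasurableSpace X] [BorelSpace X]
    [MetricSpace Y] [LocallyCompactSpace Y] [CompleteSpace Y]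
    [TopologicalSpace.SeparableSpace Y] [MeasurableSpace Y] [BorelSpace Y]
    (π : X → Y) (hπ : Measurable π)
    (μ : Measure X) [IsFiniteMeasure μ]
    (μy : Y → ProbabilityMeasure X)
    (hmeas : Measurable fun y => (μy y : Measure X))
    (hconc : ∀ᵐ y ∂(μ.map π), (μy y : Measure X) ((π ⁻¹' {y})ᶜ) = 0)
    (hdis : ∀ A : Set X, MeasurableSet A → μ A = ∫⁻ y, (μy y : Measure X) A ∂(μ.map π)) :
    ∀ A : Set Y, MeasurableSet A → (μ.map π) A < ⊤ →
      ∀ ε : ℝ≥0∞, 0 < ε →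
        ∃ K : Set Y, K ⊆ A ∧ IsClosed K ∧ (μ.map π) (A \ K) < ε ∧
          ContinuousOn μy K := by
  classical
  intro A hA hAfin ε hε
  haveI : SecondCountableTopology X :=
    UniformSpace.secondCountable_of_separable X
  set ν : Measure Y := μ.map π with hν
  haveI : IsFiniteMeasure ν := Measure.isFiniteMeasure_map μ π
  -- enumeration of a countable basis of X (with ∅ added to ensure nonemptiness)
  obtain ⟨e, he⟩ : ∃ e : ℕ → Set X, insert ∅ (TopologicalSpace.countableBasis X) = range e :=
    ((TopologicalSpace.countable_countableBasis X).insert ∅).exists_eq_range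
      (insert_nonempty _ _)
  have hopen : ∀ i, IsOpen (e i) := by
    intro i
    have : e i ∈ insert ∅ (TopologicalSpace.countableBasis X) := he ▸ mem_range_self i
    rcases this with h0 | hb
    · simp [h0]
    · exact TopologicalSpace.isOpen_of_mem_countableBasis hb
  set V : Finset ℕ → Set X := fun t => ⋃ i ∈ t, e i with hV
  have hVopen : ∀ t, IsOpen (V t) := fun t => isOpen_biUnion fun i _ => hopen i
  set h : Finset ℕ → Y → ℝ≥0 := fun t y => ((μy y : Measure X) (V t)).toNNReal with hh
  have hhmeas : ∀ t, Measurable (h t) := fun t =>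
    (Measure.measurable_coe (hVopen t).measurableSet).comp hmeas |>.ennreal_toNNReal
  -- positive weights
  obtain ⟨w, hw0, hwsum⟩ := ENNReal.exists_pos_sum_of_countable'
    (ε := ε / 2) (ENNReal.half_pos hε.ne').ne' (Finset ℕ)
  have hwne : ∀ t, w t ≠ ⊤ := fun t =>
    ((ENNReal.le_tsum t).trans_lt (hwsum.trans_le le_top)).ne
  -- closed sets
  obtain ⟨K₀, hK₀sub, hK₀closed, hK₀μ⟩ :=
    hA.exists_isClosed_diff_lt hAfin.ne (ENNReal.half_pos hε.ne').ne'
  have hex : ∀ t : Finset ℕ, ∃ C, C ⊆ A ∧ IsClosed C ∧ ν (A \ C) < w t ∧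
      ContinuousOn (h t) C := fun t =>
    lusin_nnreal ν (hhmeas t) hA (hw0 t).ne' (hwne t)
  choose C hC1 hC2 hC3 hC4 using hex
  set K : Set Y := K₀ ∩ ⋂ t, C t with hK
  have hKsub : K ⊆ A := fun y hy => hK₀sub hy.1
  have hKclosed : IsClosed K := hK₀closed.inter (isClosed_iInter fun t => hC2 t)
  refine ⟨K, hKsub, hKclosed, ?_, ?_⟩
  · have hsub : A \ K ⊆ (A \ K₀) ∪ ⋃ t, (A \ C t) := by
      intro y hy
      rcases Classical.em (y ∈ K₀) with hk | hk
      · have : ¬ y ∈ ⋂ t, C t := fun hmem => hy.2 ⟨hk, hmem⟩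
        obtain ⟨t, ht⟩ := by simpa [Set.mem_iInter] using this
        exact Or.inr (Set.mem_iUnion.mpr ⟨t, ⟨hy.1, ht⟩⟩)
      · exact Or.inl ⟨hy.1, hk⟩
    calc ν (A \ K) ≤ ν (A \ K₀) + ν (⋃ t, (A \ C t)) :=
          (measure_mono hsub).trans (measure_union_le _ _)
      _ < ε / 2 + ε / 2 := by
          refine ENNReal.add_lt_add hK₀μ ?_
          exact ((measure_iUnion_le _).trans
            (ENNReal.tsum_le_tsum fun t => (hC3 t).le)).trans_lt hwsum
      _ = ε := ENNReal.add_halves ε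
  · -- continuity
    have hcont : ∀ t, ContinuousOn (h t) K := fun t =>
      (hC4 t).mono fun y hy => Set.mem_iInter.mp hy.2 t
    intro y hy
    rw [ContinuousWithinAt]
    refine Filter.tendsto_iff_seq_tendsto.mpr fun u hu => ?_
    have humem : ∀ᶠ n in atTop, u n ∈ K := hu self_mem_nhdsWithin
    set v : ℕ → Y := fun n => if u n ∈ K then u n else y with hv
    have hvmem : ∀ n, v n ∈ K := by
      intro n
      by_cases hn : u n ∈ K <;> simp [hv, hn, hy]
    have hveq : ∀ᶠ n in atTop, v n = u n := by
      filter_upwards [humem] with n hn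
      simp [hv, hn]
    have hvtendsto : Tendsto v atTop (𝓝 y) :=
      ((hu.mono_right nhdsWithin_le_nhds).congr' (hveq.mono fun n hn => hn.symm))
    have hvK : Tendsto v atTop (𝓝[K] y) :=
      tendsto_nhdsWithin_iff.mpr ⟨hvtendsto, Eventually.of_forall hvmem⟩
    have hmain : Tendsto (fun n => μy (v n)) atTop (𝓝 (μy y)) := by
      refine tendsto_of_forall_isOpen_le_liminf fun G hG => ?_
      set L : ℝ≥0 := atTop.liminf fun n => μy (v n) G with hL
      -- approximation of G from inside
      set T : ℕ → Finset ℕ := fun k => (Finset.range k).filter (fun i => e i ⊆ G) with hT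
      have hTG : ∀ k, V (T k) ⊆ G := by
        intro k x hx
        obtain ⟨i, hi, hxi⟩ := Set.mem_iUnion₂.mp hx
        exact (Finset.mem_filter.mp hi).2 hxi
      have hGeq : G = ⋃ k, V (T k) := by
        apply Set.Subset.antisymm
        · intro x hx
          obtain ⟨b, hb, hxb, hbG⟩ :=
            (TopologicalSpace.isBasis_countableBasis X).exists_subset_of_mem_open hx hG
          have : b ∈ range e := he ▸ Set.mem_insert_of_mem _ hb
          obtain ⟨i, rfl⟩ := this
          refine Set.mem_iUnion.mpr ⟨i + 1, Set.mem_biUnion ?_ hxb⟩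
          exact Finset.mem_filter.mpr ⟨Finset.mem_range.mpr (Nat.lt_succ_self i), hbG⟩
        · exact Set.iUnion_subset hTG
      have hdir : Directed (· ⊆ ·) fun k => V (T k) := by
        refine (Monotone.directed_le ?_)
        intro k k' hkk'
        refine Set.biUnion_subset_biUnion_left ?_
        exact Finset.filter_subset_filter _ (Finset.range_subset_range.mpr hkk')
      -- key estimate for each finite union inside G
      have key : ∀ t : Finset ℕ, V t ⊆ G → h t y ≤ L := by
        intro t hsubG
        have htd : Tendsto (fun n => h t (v n)) atTop (𝓝 (h t y)) :=
          (hcont t y hy).tendsto.comp hvK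
        have hle : ∀ n, h t (v n) ≤ μy (v n) G := by
          intro n
          have := measure_mono (μ := (μy (v n) : Measure X)) hsubG
          have heq : (μy (v n)) G = ((μy (v n) : Measure X) G).toNNReal := by
            rfl
          rw [hh, heq]
          exact ENNReal.toNNReal_mono (measure_ne_top _ _) this
        have hbdd : IsBoundedUnder (· ≥ ·) atTop fun n => h t (v n) :=
          isBoundedUnder_of ⟨0, fun n => zero_le⟩
        have hcob : IsCoboundedUnder (· ≥ ·) atTop fun n => μy (v n) G :=
          (isBoundedUnder_of ⟨1, fun n =>
            ProbabilityMeasure.apply_le_one _ _⟩).isCoboundedUnder_ge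
        calc h t y = atTop.liminf fun n => h t (v n) := htd.liminf_eq.symm
          _ ≤ L := Filter.liminf_le_liminf (Eventually.of_forall hle) hbdd hcob
      -- conclude
      have hENN : ((μy y : Measure X) G) ≤ (L : ℝ≥0∞) := by
        rw [hGeq, Directed.measure_iUnion hdir]
        refine iSup_le fun k => ?_
        have : (μy y : Measure X) (V (T k)) = ((h (T k) y : ℝ≥0) : ℝ≥0∞) := by
          rw [hh]
          exact (ENNReal.coe_toNNReal (measure_ne_top _ _)).symm
        rw [this]
        exact ENNReal.coe_le_coe.mpr (key (T k) (hTG k))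
      have : ((μy y) G : ℝ≥0∞) ≤ (L : ℝ≥0∞) := by
        rwa [ProbabilityMeasure.ennreal_coeFn_eq_coeFn_toMeasure]
      exact ENNReal.coe_le_coe.mp this
    exact hmain.congr' (by filter_upwards [hveq] with n hn; rw [Function.comp_apply, ← hn])
end

section
/- Let X be a locally compact separable metric space with metric d_X, let μ be a finite Borel measure on X, let (Y, d_Y) be a metric space, let p : X → Y be a Borel map with ν = p_*μ, and let (μ_y)_{y∈Y} be a disintegration of μ over p. Assume that for all y, y' ∈ Y the squared 2-Wasserstein distance between the conditional measures equals the squared distance in Y, i.e. inf_γ ∫_{X×X} d_X(x₁, x₂)² dγ(x₁, x₂) = d_Y(y, y')², where the infimum is over all couplings γ of (μ_y, μ_{y'}). Then the disintegration map y ↦ μ_y is continuous from Y into ProbabilityMeasure(X) with the topology of weak convergence. -/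
open MeasureTheory Metric
open scoped ENNReal

lemma lp_le_of_coupling {X : Type*} [MetricSpace X] [MeasurableSpace X] [OpensMeasurableSpace X] [SecondCountableTopology X]
    (μ1 μ2 : Measure X) [IsProbabilityMeasure μ1] [IsProbabilityMeasure μ2]
    (γ : Measure (X × X)) [IsProbabilityMeasure γ]
    (h1 : γ.map Prod.fst = μ1) (h2 : γ.map Prod.snd = μ2)
    (δ : ℝ≥0∞) (hC : ∫⁻ q, ENNReal.ofReal (dist q.1 q.2 ^ 2) ∂γ ≤ δ ^ 3) :
    levyProkhorovEDist μ1 μ2 ≤ δ := by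
  apply levyProkhorovEDist_le_of_forall_le μ1 μ2 δ
  intro ε B hδε hεtop hB
  have hε0 : (0 : ℝ≥0∞) < ε := lt_of_le_of_lt zero_le hδε
  have hεt : (0 : ℝ) < ε.toReal := ENNReal.toReal_pos hε0.ne' hεtop.ne
  -- inclusion
  have hincl : (Prod.fst ⁻¹' B : Set (X × X)) ⊆
      (Prod.snd ⁻¹' (thickening ε.toReal B)) ∪ {q | ε.toReal ≤ dist q.1 q.2} := by
    rintro ⟨x1, x2⟩ hx
    by_cases hd : ε.toReal ≤ dist x1 x2
    · exact Or.inr hd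
    · left
      push_neg at hd
      exact mem_thickening_iff.2 ⟨x1, hx, by simpa [dist_comm] using hd⟩
  have hmap1 : μ1 B = γ (Prod.fst ⁻¹' B) := by
    rw [← h1, Measure.map_apply measurable_fst hB]
  have hmap2 : γ (Prod.snd ⁻¹' (thickening ε.toReal B)) = μ2 (thickening ε.toReal B) := by
    rw [← h2, Measure.map_apply measurable_snd isOpen_thickening.measurableSet]
  -- Markov
  have hmarkov : γ {q : X × X | ε.toReal ≤ dist q.1 q.2} ≤ ε := by
    have hsub : {q : X × X | ε.toReal ≤ dist q.1 q.2} ⊆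
        {q : X × X | ENNReal.ofReal (ε.toReal ^ 2) ≤ ENNReal.ofReal (dist q.1 q.2 ^ 2)} := by
      intro q hq
      exact ENNReal.ofReal_le_ofReal (pow_le_pow_left₀ hεt.le hq 2)
    have hmeas : AEMeasurable (fun q : X × X => ENNReal.ofReal (dist q.1 q.2 ^ 2)) γ := by
      apply Measurable.aemeasurable
      exact (measurable_dist.comp (measurable_fst.prodMk measurable_snd)).pow_const 2
        |>.ennreal_ofReal
    have key := mul_meas_ge_le_lintegral₀ hmeas (ENNReal.ofReal (ε.toReal ^ 2))
    have hε2 : ENNReal.ofReal (ε.toReal ^ 2) = ε ^ 2 := by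
      rw [sq, ENNReal.ofReal_mul ENNReal.toReal_nonneg, ENNReal.ofReal_toReal hεtop.ne, sq]
    have key2 : ε ^ 2 * γ {q : X × X | ε.toReal ≤ dist q.1 q.2} ≤ δ ^ 3 := by
      calc ε ^ 2 * γ {q : X × X | ε.toReal ≤ dist q.1 q.2}
          ≤ ε ^ 2 * γ {q : X × X | ENNReal.ofReal (ε.toReal ^ 2)
              ≤ ENNReal.ofReal (dist q.1 q.2 ^ 2)} := by
            exact mul_le_mul_right (measure_mono hsub) _
        _ ≤ ∫⁻ q, ENNReal.ofReal (dist q.1 q.2 ^ 2) ∂γ := by rw [← hε2]; exact key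
        _ ≤ δ ^ 3 := hC
    have hδ3 : δ ^ 3 ≤ ε ^ 3 := pow_le_pow_left' hδε.le 3
    have hε2ne : ε ^ 2 ≠ 0 := pow_ne_zero 2 hε0.ne'
    have hε2top : ε ^ 2 ≠ ∞ := by
      exact ENNReal.pow_ne_top hεtop.ne
    rw [mul_comm] at key2
    rw [← ENNReal.le_div_iff_mul_le (Or.inl hε2ne) (Or.inl hε2top)] at key2
    refine le_trans key2 (le_trans (ENNReal.div_le_div_right hδ3 _) ?_)
    rw [pow_succ, mul_comm, mul_div_assoc, ENNReal.div_self hε2ne hε2top, mul_one]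
  calc μ1 B = γ (Prod.fst ⁻¹' B) := hmap1
    _ ≤ γ (Prod.snd ⁻¹' (thickening ε.toReal B)) + γ {q : X × X | ε.toReal ≤ dist q.1 q.2} :=
        le_trans (measure_mono hincl) (measure_union_le _ _)
    _ ≤ μ2 (thickening ε.toReal B) + ε := by rw [hmap2]; exact add_le_add_right hmarkov _

/-- If `(μ_y)` is a disintegration of a finite Borel measure `μ` on `X` over a Borel
map `p : X → Y` and the 2-Wasserstein distance between conditional measures equals the
distance in the base (`W₂(μ_y, μ_{y'}) = d_Y(y, y')`, e.g. for metric measure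
foliations), then the disintegration map `y ↦ μ_y` is weakly continuous. -/
theorem disintegration_map_continuous_of_wasserstein_eq_dist
    {X Y : Type*}
    [MetricSpace X] [LocallyCompactSpace X] [TopologicalSpace.SeparableSpace X]
    [MeasurableSpace X] [BorelSpace X]
    [MetricSpace Y] [MeasurableSpace Y] [BorelSpace Y]
    (p : X → Y) (hp : Measurable p)
    (μ : Measure X) [IsFiniteMeasure μ]
    (μy : Y → ProbabilityMeasure X)
    (hmeas : Measurable fun y => (μy y : Measure X))
    (hconc : ∀ᵐ y ∂(μ.map p), (μy y : Measure X) ((p ⁻¹' {y})ᶜ) = 0)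
    (hdis : ∀ A : Set X, MeasurableSet A → μ A = ∫⁻ y, (μy y : Measure X) A ∂(μ.map p))
    (hW : ∀ y y' : Y,
      sInf {r : ℝ≥0∞ | ∃ γ : Measure (X × X), IsProbabilityMeasure γ ∧
          γ.map Prod.fst = (μy y : Measure X) ∧
          γ.map Prod.snd = (μy y' : Measure X) ∧
          r = ∫⁻ q, ENNReal.ofReal (dist q.1 q.2 ^ 2) ∂γ}
        = ENNReal.ofReal (dist y y' ^ 2)) :
    Continuous μy := by
  haveI : SecondCountableTopology X := UniformSpace.secondCountable_of_separable X
  have hf : Continuous (fun y => LevyProkhorov.ofMeasure (μy y)) := by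
    rw [Metric.continuous_iff]
    intro y ε hε
    set e := min (ε / 2) 1 with he_def
    have he : 0 < e := lt_min (by linarith) one_pos
    refine ⟨Real.sqrt (e ^ 3), Real.sqrt_pos.2 (by positivity), fun y' hy' => ?_⟩
    have hd2 : dist y' y ^ 2 < e ^ 3 := by
      have h1 : Real.sqrt (e ^ 3) ^ 2 = e ^ 3 := Real.sq_sqrt (by positivity)
      nlinarith [dist_nonneg (x := y') (y := y), Real.sqrt_nonneg (e ^ 3)]
    have hLP : levyProkhorovEDist (μy y' : Measure X) (μy y : Measure X)
        ≤ ENNReal.ofReal e := by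
      have hlt : sInf {r : ℝ≥0∞ | ∃ γ : Measure (X × X), IsProbabilityMeasure γ ∧
          γ.map Prod.fst = (μy y' : Measure X) ∧
          γ.map Prod.snd = (μy y : Measure X) ∧
          r = ∫⁻ q, ENNReal.ofReal (dist q.1 q.2 ^ 2) ∂γ} < (ENNReal.ofReal e) ^ 3 := by
        rw [hW y' y, ← ENNReal.ofReal_pow he.le]
        exact (ENNReal.ofReal_lt_ofReal_iff (by positivity)).2 hd2
      rw [sInf_lt_iff] at hlt
      obtain ⟨r, ⟨γ, hγp, hγ1, hγ2, hr⟩, hrlt⟩ := hlt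
      haveI := hγp
      exact lp_le_of_coupling _ _ γ hγ1 hγ2 _ (by rw [← hr]; exact hrlt.le)
    have hdist : dist (LevyProkhorov.ofMeasure (μy y'))
        (LevyProkhorov.ofMeasure (μy y))
        = (levyProkhorovEDist (μy y' : Measure X) (μy y : Measure X)).toReal := rfl
    rw [hdist]
    have : (levyProkhorovEDist (μy y' : Measure X) (μy y : Measure X)).toReal ≤ e :=
      ENNReal.toReal_le_of_le_ofReal he.le hLP
    calc _ ≤ e := this
      _ ≤ ε / 2 := min_le_left _ _
      _ < ε := by linarith
  exact LevyProkhorov.continuous_toMeasure_probabilityMeasure.comp hf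
end
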